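/- Fix y ∈ ℝ and define, on a neighborhood of ξ = 0 on which 1 − γ e^{πiξ/√2} ≠ 0 (such a neighborhood exists since |γ| < 1), J(ξ) = d/dξ [ ((1 − γ* e^{πiξ/√2}) / (1 − γ e^{πiξ/√2})) e^{−4πβξ} ]. Then J(0) = 0; equivalently, (γ − γ*) i /(2√2) = 2β (1 − γ)(1 − γ*). -/

import Mathlib

noncomputable section

/-- The Bäcklund parameter λ = √2 + 1. -/
def lam : ℂ := ((Real.sqrt 2 + 1 : ℝ) : ℂ)

/-- β = √(y²/2 + 1/32). -/
def beta (y : ℝ) : ℝ := Real.sqrt (y^2/2 + 1/32)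

/-- b = −y/2. -/
def bb (y : ℝ) : ℝ := -y/2

/-- A₁ = 1/2 − b/(2β). -/
def A1 (y : ℝ) : ℂ := ((1/2 - bb y/(2*beta y) : ℝ) : ℂ)

/-- A₂ = −(λ/√2)(1/2 − √2/(16βi)). -/
def A2 (y : ℝ) : ℂ :=
  -(lam/(Real.sqrt 2 : ℂ)) * (1/2 - (Real.sqrt 2 : ℂ)/(16*(beta y : ℂ)*Complex.I))

/-- A₃ = −(1/2 + b/(2β)). -/
def A3 (y : ℝ) : ℂ := ((-(1/2 + bb y/(2*beta y)) : ℝ) : ℂ)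

/-- A₄ = (λ/√2)(1/2 + √2/(16βi)). -/
def A4 (y : ℝ) : ℂ :=
  (lam/(Real.sqrt 2 : ℂ)) * (1/2 + (Real.sqrt 2 : ℂ)/(16*(beta y : ℂ)*Complex.I))

/-- γ = A₃/A₂. -/
def gam (y : ℝ) : ℂ := A3 y / A2 y

/-- γ* = A₁/A₄. -/
def gamStar (y : ℝ) : ℂ := A1 y / A4 y

lemma beta_pos (y : ℝ) : 0 < beta y := Real.sqrt_pos.mpr (by positivity)
lemma beta_sq (y : ℝ) : (beta y)^2 = y^2/2 + 1/32 := Real.sq_sqrt (by positivity)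
lemma hsC : ((Real.sqrt 2:ℝ):ℂ)^2 = 2 := by
  norm_cast; exact Real.sq_sqrt (by norm_num)
lemma hsne : ((Real.sqrt 2:ℝ):ℂ) ≠ 0 := by
  intro h; rw [← Complex.ofReal_zero] at h
  exact (by positivity : (0:ℝ) < Real.sqrt 2).ne' (Complex.ofReal_inj.mp h)
lemma hbne (y : ℝ) : ((beta y:ℝ):ℂ) ≠ 0 := by
  intro h; rw [← Complex.ofReal_zero] at h
  exact (beta_pos y).ne' (Complex.ofReal_inj.mp h)

lemma A2_eq (y : ℝ) : A2 y
    = ((-(Real.sqrt 2+2)/4 : ℝ) : ℂ) + ((-(Real.sqrt 2+1)/(16*beta y) : ℝ) : ℂ) * Complex.I := by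
  have hs := hsC; have hb := hbne y
  have hI : Complex.I^2 = -1 := Complex.I_sq
  unfold A2 lam
  rw [div_eq_mul_inv ((Real.sqrt 2:ℝ):ℂ), mul_inv, Complex.inv_I]
  push_cast
  field_simp
  linear_combination (32*(beta y:ℂ)) * hs

lemma A4_eq (y : ℝ) : A4 y
    = (((Real.sqrt 2+2)/4 : ℝ) : ℂ) + ((-(Real.sqrt 2+1)/(16*beta y) : ℝ) : ℂ) * Complex.I := by
  have hs := hsC; have hb := hbne y
  have hI : Complex.I^2 = -1 := Complex.I_sq
  unfold A4 lam
  rw [div_eq_mul_inv ((Real.sqrt 2:ℝ):ℂ), mul_inv, Complex.inv_I]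
  push_cast
  field_simp
  linear_combination (-32*(beta y:ℂ)) * hs

lemma imA2 (y : ℝ) : (A2 y).im = -(Real.sqrt 2+1)/(16*beta y) := by
  rw [A2_eq y]; simp only [Complex.add_im, Complex.ofReal_im, Complex.mul_im, Complex.ofReal_re, Complex.I_re, Complex.I_im]; ring

lemma imA4 (y : ℝ) : (A4 y).im = -(Real.sqrt 2+1)/(16*beta y) := by
  rw [A4_eq y]; simp only [Complex.add_im, Complex.ofReal_im, Complex.mul_im, Complex.ofReal_re, Complex.I_re, Complex.I_im]; ring

lemma im_ne (y : ℝ) : -(Real.sqrt 2+1)/(16*beta y) ≠ 0 := by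
  have h1 : (0:ℝ) < Real.sqrt 2 + 1 := by positivity
  have h2 := beta_pos y
  intro h
  rw [div_eq_zero_iff] at h
  rcases h with h | h
  · linarith
  · linarith

lemma A2_ne (y : ℝ) : A2 y ≠ 0 := fun h => im_ne y (by rw [← imA2 y, h]; simp)
lemma A4_ne (y : ℝ) : A4 y ≠ 0 := fun h => im_ne y (by rw [← imA4 y, h]; simp)

lemma one_sub_gam_ne (y : ℝ) : 1 - gam y ≠ 0 := by
  intro h
  have hg : gam y = 1 := (sub_eq_zero.mp h).symm
  have hA : A3 y = A2 y := by
    have := (div_eq_one_iff_eq (A2_ne y)).mp hg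
    simpa [gam] using this
  apply im_ne y
  rw [← imA2 y, ← hA]
  simp only [A3, Complex.ofReal_im]

theorem tst : True := trivial


lemma key2 (y : ℝ) :
    (A3 y * A4 y - A1 y * A2 y) * Complex.I / (2 * (Real.sqrt 2 : ℂ))
      = 2 * (beta y : ℂ) * (A2 y - A3 y) * (A4 y - A1 y) := by
  have hs := hsC
  have hb := hbne y
  have hI : Complex.I^2 = -1 := Complex.I_sq
  have hb2 : ((beta y:ℝ):ℂ)^2 = (y:ℂ)^2/2 + 1/32 := by
    rw [← Complex.ofReal_pow, beta_sq y]; push_cast; ring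
  rw [A2_eq, A4_eq]
  unfold A1 A3 bb
  push_cast
  field_simp
  ring_nf
  linear_combination (norm := ring_nf)
    ((1024:ℂ)*(beta y:ℂ) + 768*(Real.sqrt 2:ℂ)*(beta y:ℂ)
      - 512*(Real.sqrt 2:ℂ)^2*(beta y:ℂ) - 256*(Real.sqrt 2:ℂ)^3*(beta y:ℂ)) * hI
    + ((512:ℂ)*(beta y:ℂ) + 256*(Real.sqrt 2:ℂ)*(beta y:ℂ)
      + 4096*(Real.sqrt 2:ℂ)*(beta y:ℂ)^3 - 2048*(y:ℂ)*Complex.I*(beta y:ℂ)) * hs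
    + ((8192:ℂ)*(Real.sqrt 2:ℂ)*(beta y:ℂ)) * hb2

lemma key (y : ℝ) :
    (gam y - gamStar y) * Complex.I / (2 * (Real.sqrt 2 : ℂ))
      = 2 * (beta y : ℂ) * (1 - gam y) * (1 - gamStar y) := by
  have h := key2 y
  rw [div_eq_iff (by simp [hsne] : (2 * (Real.sqrt 2:ℂ)) ≠ 0)] at h
  unfold gam gamStar
  field_simp [A2_ne y, A4_ne y, hsne]
  ring_nf
  linear_combination (norm := ring_nf) h

/-- The function whose derivative is J. -/
def Jf (y : ℝ) (ξ : ℝ) : ℂ :=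
  ((1 - gamStar y * Complex.exp ((Real.pi : ℂ) * Complex.I * (ξ : ℂ) / (Real.sqrt 2 : ℂ))) /
   (1 - gam y * Complex.exp ((Real.pi : ℂ) * Complex.I * (ξ : ℂ) / (Real.sqrt 2 : ℂ))))
  * Complex.exp (-(4 * (Real.pi : ℂ) * (beta y : ℂ) * (ξ : ℂ)))

/-- J(0) = 0; equivalently (γ − γ*)i/(2√2) = 2β(1 − γ)(1 − γ*). -/
theorem J_at_zero (y : ℝ) :
    deriv (Jf y) 0 = 0 ∧
    (gam y - gamStar y) * Complex.I / (2 * (Real.sqrt 2 : ℂ))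
      = 2 * (beta y : ℂ) * (1 - gam y) * (1 - gamStar y) := by
  refine ⟨?_, key y⟩
  have hpine : ((Real.pi:ℝ):ℂ) ≠ 0 := Complex.ofReal_ne_zero.mpr Real.pi_ne_zero
  -- derivative of the exponential E
  have hinner : HasDerivAt (fun z : ℂ => (Real.pi : ℂ) * Complex.I * z / (Real.sqrt 2 : ℂ))
      (((Real.pi : ℂ) * Complex.I) * 1 / (Real.sqrt 2 : ℂ)) 0 :=
    ((hasDerivAt_id (0:ℂ)).const_mul ((Real.pi : ℂ) * Complex.I)).div_const _
  have hEC : HasDerivAt (fun z : ℂ => Complex.exp ((Real.pi : ℂ) * Complex.I * z / (Real.sqrt 2 : ℂ)))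
      (Complex.exp ((Real.pi : ℂ) * Complex.I * 0 / (Real.sqrt 2 : ℂ)) *
        (((Real.pi : ℂ) * Complex.I) * 1 / (Real.sqrt 2 : ℂ))) 0 :=
    (Complex.hasDerivAt_exp _).comp 0 hinner
  have hE : HasDerivAt (fun ξ : ℝ =>
        Complex.exp ((Real.pi : ℂ) * Complex.I * (ξ:ℂ) / (Real.sqrt 2 : ℂ)))
      (Complex.exp ((Real.pi : ℂ) * Complex.I * 0 / (Real.sqrt 2 : ℂ)) *
        (((Real.pi : ℂ) * Complex.I) * 1 / (Real.sqrt 2 : ℂ))) 0 := by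
    have := hEC.comp_ofReal (z := 0)
    simpa using this
  have hinner2 : HasDerivAt (fun z : ℂ => -(4 * (Real.pi : ℂ) * (beta y : ℂ) * z))
      (-(4 * (Real.pi : ℂ) * (beta y : ℂ) * 1)) 0 := by
    simpa using ((hasDerivAt_id (0:ℂ)).const_mul (4 * (Real.pi : ℂ) * (beta y : ℂ))).fun_neg
  have hFC : HasDerivAt (fun z : ℂ => Complex.exp (-(4 * (Real.pi : ℂ) * (beta y : ℂ) * z)))
      (Complex.exp (-(4 * (Real.pi : ℂ) * (beta y : ℂ) * 0)) *
        (-(4 * (Real.pi : ℂ) * (beta y : ℂ) * 1))) 0 :=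
    (Complex.hasDerivAt_exp _).comp 0 hinner2
  have hF : HasDerivAt (fun ξ : ℝ => Complex.exp (-(4 * (Real.pi : ℂ) * (beta y : ℂ) * (ξ:ℂ))))
      (Complex.exp (-(4 * (Real.pi : ℂ) * (beta y : ℂ) * 0)) *
        (-(4 * (Real.pi : ℂ) * (beta y : ℂ) * 1))) 0 := by
    have := hFC.comp_ofReal (z := 0)
    simpa using this
  set E' : ℂ := Complex.exp ((Real.pi : ℂ) * Complex.I * 0 / (Real.sqrt 2 : ℂ)) *
        (((Real.pi : ℂ) * Complex.I) * 1 / (Real.sqrt 2 : ℂ)) with hE'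
  set F' : ℂ := Complex.exp (-(4 * (Real.pi : ℂ) * (beta y : ℂ) * 0)) *
        (-(4 * (Real.pi : ℂ) * (beta y : ℂ) * 1)) with hF'
  have hN : HasDerivAt (fun ξ : ℝ => 1 - gamStar y *
        Complex.exp ((Real.pi : ℂ) * Complex.I * (ξ:ℂ) / (Real.sqrt 2 : ℂ)))
      (-(gamStar y * E')) 0 := (hE.const_mul (gamStar y)).const_sub 1
  have hD : HasDerivAt (fun ξ : ℝ => 1 - gam y *
        Complex.exp ((Real.pi : ℂ) * Complex.I * (ξ:ℂ) / (Real.sqrt 2 : ℂ)))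
      (-(gam y * E')) 0 := (hE.const_mul (gam y)).const_sub 1
  have hden : (1 - gam y *
      Complex.exp ((Real.pi : ℂ) * Complex.I * ((0:ℝ):ℂ) / (Real.sqrt 2 : ℂ))) ≠ 0 := by
    simpa using one_sub_gam_ne y
  have hq := hN.fun_div hD hden
  have hJ := hq.mul hF
  have hJd : deriv (Jf y) 0 = _ := hJ.deriv
  rw [hJd]
  have hkey := key y
  rw [div_eq_iff (by simp [hsne] : (2 * (Real.sqrt 2:ℂ)) ≠ 0)] at hkey
  simp only [hE', hF', Complex.ofReal_zero, mul_zero, zero_mul, zero_div, mul_one,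
    neg_zero, Complex.exp_zero, one_mul, mul_zero]
  have h1 : (1 - gam y) ≠ 0 := one_sub_gam_ne y
  field_simp
  ring_nf
  linear_combination (norm := ring_nf) (((Real.pi:ℝ):ℂ)) * hkey
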